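/- Let T be a finite tree rooted at c₀ with a path c₀, c₁, …, c_l of distinct vertices (so d_T(c₀,c_l) = l). For the general monomer-dimer model, the inequality 1_{l≥1} · Z_{T_{c₁} − T_{c_l}} · Z_T ≥ Z_{T_{c₁}} · Z_{T − T_{c_l}} holds if l is odd, and the reversed inequality ≤ holds if l is even. Here T_v denotes the subtree of v and its descendants, and T − T_{c_l} is T with the subtree T_{c_l} removed. -/

import Mathlib

set_option linter.unusedSectionVars false
set_option linter.unusedVariables false
set_option maxHeartbeats 1000000

open Finset
open scoped Classical

/-- The set of matchings (dimeric configurations) of `G` using only vertices of `S`. -/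
noncomputable def matchingsOn {V : Type*} (G : SimpleGraph V) (S : Finset V) :
    Finset (Finset (Sym2 V)) :=
  S.sym2.powerset.filter fun D =>
    (∀ e ∈ D, e ∈ G.edgeSet) ∧
      (D : Set (Sym2 V)).Pairwise fun e f => ∀ v, v ∈ e → v ∉ f

/-- General monomer-dimer partition function with vertex weights `x` and edge
weights `w`:  `Z_G = Σ_D (Π_{e∈D} w_e)(Π_{v uncovered} x_v)`. -/
noncomputable def Zgen {V : Type*} (G : SimpleGraph V) (S : Finset V)
    (x : V → ℝ) (w : Sym2 V → ℝ) : ℝ :=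
  ∑ D ∈ matchingsOn G S,
    (∏ e ∈ D, w e) * ∏ v ∈ S.filter (fun v => ∀ e ∈ D, v ∉ e), x v

/-- The set of descendants of `v` in the tree `T` rooted at `root` (vertices whose
geodesic from the root passes through `v`), i.e. the vertex set of the subtree `T_v`. -/
noncomputable def descFinset {V : Type*} [Fintype V] (T : SimpleGraph V)
    (root v : V) : Finset V :=
  Finset.univ.filter fun u => T.dist root u = T.dist root v + T.dist v u

section ZgenLemmas
variable {V : Type*} {G : SimpleGraph V} {S S1 S2 U : Finset V}
  {x : V → ℝ} {w : Sym2 V → ℝ}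

lemma mem_matchingsOn {D : Finset (Sym2 V)} :
    D ∈ matchingsOn G S ↔ D ⊆ S.sym2 ∧ (∀ e ∈ D, e ∈ G.edgeSet) ∧
      (D : Set (Sym2 V)).Pairwise fun e f => ∀ v, v ∈ e → v ∉ f := by
  simp [matchingsOn, Finset.mem_filter, Finset.mem_powerset, and_assoc]

lemma empty_mem_matchingsOn : (∅ : Finset (Sym2 V)) ∈ matchingsOn G S := by
  simp [mem_matchingsOn]

lemma Zgen_pos (hx : ∀ v, 0 < x v) (hw : ∀ e, 0 < w e) : 0 < Zgen G S x w := by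
  refine Finset.sum_pos (fun D _ => ?_) ⟨∅, empty_mem_matchingsOn⟩
  exact mul_pos (Finset.prod_pos fun e _ => hw e) (Finset.prod_pos fun v _ => hx v)

lemma Zgen_empty : Zgen G ∅ x w = 1 := by
  have h : matchingsOn G (∅ : Finset V) = {∅} := by
    ext D
    simp only [mem_matchingsOn, Finset.mem_singleton]
    constructor
    · rintro ⟨hsub, -, -⟩
      simpa [Finset.subset_empty] using hsub
    · rintro rfl
      simp
  simp [Zgen, h]

lemma not_mem_sym2_both (hd : Disjoint S1 S2) {e : Sym2 V}
    (h1 : e ∈ S1.sym2) (h2 : e ∈ S2.sym2) : False := by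
  induction e with
  | _ a b =>
    rw [Finset.mk_mem_sym2_iff] at h1 h2
    exact (Finset.disjoint_left.1 hd) h1.1 h2.1

lemma Zgen_union (hd : Disjoint S1 S2)
    (hsep : ∀ a ∈ S1, ∀ b ∈ S2, ¬ G.Adj a b)
    (hU : ∀ a, a ∈ U ↔ a ∈ S1 ∨ a ∈ S2) :
    Zgen G U x w = Zgen G S1 x w * Zgen G S2 x w := by
  obtain rfl : U = S1 ∪ S2 := by ext a; simp [hU]
  have hsplit : ∀ D ∈ matchingsOn G (S1 ∪ S2), ∀ e ∈ D, e ∈ S1.sym2 ∨ e ∈ S2.sym2 := by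
    intro D hD e he
    obtain ⟨hsub, hedge, -⟩ := mem_matchingsOn.1 hD
    have hes := hsub he
    have hadj := hedge e he
    induction e with
    | _ a b =>
      rw [Finset.mk_mem_sym2_iff] at hes
      rw [SimpleGraph.mem_edgeSet] at hadj
      rcases Finset.mem_union.1 hes.1 with ha1 | ha2
      · rcases Finset.mem_union.1 hes.2 with hb1 | hb2
        · exact Or.inl (Finset.mk_mem_sym2_iff.2 ⟨ha1, hb1⟩)
        · exact absurd hadj (hsep a ha1 b hb2)
      · rcases Finset.mem_union.1 hes.2 with hb1 | hb2
        · exact absurd hadj.symm (hsep b hb1 a ha2)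
        · exact Or.inr (Finset.mk_mem_sym2_iff.2 ⟨ha2, hb2⟩)
  rw [Zgen, Zgen, Zgen, Finset.sum_mul_sum, ← Finset.sum_product']
  refine Finset.sum_nbij' (i := fun D => (D.filter (· ∈ S1.sym2), D.filter (· ∈ S2.sym2)))
    (j := fun p => p.1 ∪ p.2) ?_ ?_ ?_ ?_ ?_
  · -- hi : maps into product set
    intro D hD
    obtain ⟨hsub, hedge, hpair⟩ := mem_matchingsOn.1 hD
    rw [Finset.mem_product]
    constructor <;>
    · rw [mem_matchingsOn]
      refine ⟨fun e he => (Finset.mem_filter.1 he).2, fun e he => hedge e (Finset.mem_filter.1 he).1,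
        hpair.mono ?_⟩
      intro e he
      exact Finset.mem_coe.2 (Finset.filter_subset _ _ (Finset.mem_coe.1 he))
  · -- hj : union maps into big set
    intro p hp
    rw [Finset.mem_product] at hp
    obtain ⟨h1sub, h1edge, h1pair⟩ := mem_matchingsOn.1 hp.1
    obtain ⟨h2sub, h2edge, h2pair⟩ := mem_matchingsOn.1 hp.2
    rw [mem_matchingsOn]
    refine ⟨?_, ?_, ?_⟩
    · intro e he
      rcases Finset.mem_union.1 he with h | h
      · exact Finset.sym2_mono Finset.subset_union_left (h1sub h)
      · exact Finset.sym2_mono Finset.subset_union_right (h2sub h)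
    · intro e he
      rcases Finset.mem_union.1 he with h | h
      · exact h1edge e h
      · exact h2edge e h
    · intro e he f hf hne
      rw [Finset.mem_coe, Finset.mem_union] at he hf
      have key : ∀ e' f', e' ∈ p.1 → f' ∈ p.2 → ∀ v, v ∈ e' → v ∉ f' := by
        intro e' f' he' hf' v hv hvf
        have h1 : v ∈ S1 := Finset.mem_sym2_iff.1 (h1sub he') v hv
        have h2 : v ∈ S2 := Finset.mem_sym2_iff.1 (h2sub hf') v hvf
        exact (Finset.disjoint_left.1 hd) h1 h2
      rcases he with he | he <;> rcases hf with hf | hf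
      · exact h1pair he hf hne
      · exact key e f he hf
      · intro v hv hvf; exact key f e hf he v hvf hv
      · exact h2pair he hf hne
  · -- left_inv
    intro D hD
    ext e
    simp only [Finset.mem_union, Finset.mem_filter]
    constructor
    · rintro (⟨h, -⟩ | ⟨h, -⟩) <;> exact h
    · intro he
      rcases hsplit D hD e he with h | h
      · exact Or.inl ⟨he, h⟩
      · exact Or.inr ⟨he, h⟩
  · -- right_inv
    intro p hp
    rw [Finset.mem_product] at hp
    obtain ⟨h1sub, -, -⟩ := mem_matchingsOn.1 hp.1
    obtain ⟨h2sub, -, -⟩ := mem_matchingsOn.1 hp.2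
    have hd12 : Disjoint p.1 p.2 := by
      rw [Finset.disjoint_left]
      intro e he1 he2
      exact not_mem_sym2_both hd (h1sub he1) (h2sub he2)
    ext1
    · ext e
      simp only [Finset.mem_filter, Finset.mem_union]
      constructor
      · rintro ⟨he | he, hs⟩
        · exact he
        · exact absurd (h2sub he) (fun h => not_mem_sym2_both hd hs h)
      · intro he; exact ⟨Or.inl he, h1sub he⟩
    · ext e
      simp only [Finset.mem_filter, Finset.mem_union]
      constructor
      · rintro ⟨he | he, hs⟩
        · exact absurd (h1sub he) (fun h => not_mem_sym2_both hd h hs)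
        · exact he
      · intro he; exact ⟨Or.inr he, h2sub he⟩
  · -- term equality
    intro D hD
    obtain ⟨hsub, hedge, hpair⟩ := mem_matchingsOn.1 hD
    have hDeq : D.filter (· ∈ S1.sym2) ∪ D.filter (· ∈ S2.sym2) = D := by
      ext e
      simp only [Finset.mem_union, Finset.mem_filter]
      constructor
      · rintro (⟨h, -⟩ | ⟨h, -⟩) <;> exact h
      · intro he
        rcases hsplit D hD e he with h | h
        · exact Or.inl ⟨he, h⟩
        · exact Or.inr ⟨he, h⟩
    have hdfil : Disjoint (D.filter (· ∈ S1.sym2)) (D.filter (· ∈ S2.sym2)) := by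
      rw [Finset.disjoint_left]
      intro e he1 he2
      exact not_mem_sym2_both hd (Finset.mem_filter.1 he1).2 (Finset.mem_filter.1 he2).2
    have hw' : ∏ e ∈ D, w e =
        (∏ e ∈ D.filter (· ∈ S1.sym2), w e) * ∏ e ∈ D.filter (· ∈ S2.sym2), w e := by
      rw [← Finset.prod_union hdfil, hDeq]
    have hfil : (S1 ∪ S2).filter (fun v => ∀ e ∈ D, v ∉ e) =
        S1.filter (fun v => ∀ e ∈ D.filter (· ∈ S1.sym2), v ∉ e) ∪
        S2.filter (fun v => ∀ e ∈ D.filter (· ∈ S2.sym2), v ∉ e) := by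
      ext v
      simp only [Finset.mem_union, Finset.mem_filter]
      constructor
      · rintro ⟨hv | hv, hun⟩
        · exact Or.inl ⟨hv, fun e he => hun e he.1⟩
        · exact Or.inr ⟨hv, fun e he => hun e he.1⟩
      · rintro (⟨hv, hun⟩ | ⟨hv, hun⟩)
        · refine ⟨Or.inl hv, fun e he hve => ?_⟩
          rcases hsplit D hD e he with h | h
          · exact hun e ⟨he, h⟩ hve
          · exact (Finset.disjoint_left.1 hd) hv (Finset.mem_sym2_iff.1 h v hve)
        · refine ⟨Or.inr hv, fun e he hve => ?_⟩
          rcases hsplit D hD e he with h | h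
          · exact (Finset.disjoint_left.1 hd) (Finset.mem_sym2_iff.1 h v hve) hv
          · exact hun e ⟨he, h⟩ hve
    have hdisjfil : Disjoint (S1.filter (fun v => ∀ e ∈ D.filter (· ∈ S1.sym2), v ∉ e))
        (S2.filter (fun v => ∀ e ∈ D.filter (· ∈ S2.sym2), v ∉ e)) :=
      hd.mono (Finset.filter_subset _ _) (Finset.filter_subset _ _)
    dsimp only
    rw [hfil, Finset.prod_union hdisjfil, hw']
    ring

lemma Zgen_rec {v : V} {S S' N : Finset V} {M : V → Finset V}
    (hv : v ∈ S)
    (hS' : ∀ z, z ∈ S' ↔ z ∈ S ∧ z ≠ v)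
    (hN : ∀ u, u ∈ N ↔ u ∈ S ∧ G.Adj v u)
    (hM : ∀ u ∈ N, ∀ z, z ∈ M u ↔ z ∈ S ∧ z ≠ v ∧ z ≠ u) :
    Zgen G S x w = x v * Zgen G S' x w +
      ∑ u ∈ N, w s(v, u) * Zgen G (M u) x w := by
  obtain rfl : S' = S.erase v := by
    ext z; rw [hS', Finset.mem_erase, and_comm]
  have hMeq : ∀ u ∈ N, M u = (S.erase v).erase u := by
    intro u hu
    ext z
    rw [hM u hu, Finset.mem_erase, Finset.mem_erase]
    constructor
    · rintro ⟨h1, h2, h3⟩; exact ⟨h3, h2, h1⟩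
    · rintro ⟨h3, h2, h1⟩; exact ⟨h1, h2, h3⟩
  obtain rfl : N = (S.erase v).filter (G.Adj v) := by
    ext u
    rw [hN]
    simp only [Finset.mem_filter, Finset.mem_erase]
    constructor
    · rintro ⟨h1, h2⟩; exact ⟨⟨h2.ne', h1⟩, h2⟩
    · rintro ⟨⟨-, h1⟩, h2⟩; exact ⟨h1, h2⟩
  have hsum2 : ∑ u ∈ (S.erase v).filter (G.Adj v), w s(v, u) * Zgen G (M u) x w
      = ∑ u ∈ (S.erase v).filter (G.Adj v), w s(v, u) * Zgen G ((S.erase v).erase u) x w :=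
    Finset.sum_congr rfl fun u hu => by rw [hMeq u hu]
  rw [hsum2]
  -- now the core identity
  rw [Zgen, ← Finset.sum_filter_add_sum_filter_not (matchingsOn G S) (fun D => ∀ e ∈ D, v ∉ e)]
  have hset : (matchingsOn G S).filter (fun D => ∀ e ∈ D, v ∉ e)
      = matchingsOn G (S.erase v) := by
    ext D
    simp only [Finset.mem_filter, mem_matchingsOn]
    constructor
    · rintro ⟨⟨hsub, hedge, hpair⟩, hfree⟩
      refine ⟨fun e he => Finset.mem_sym2_iff.2 fun a ha => Finset.mem_erase.2
        ⟨?_, Finset.mem_sym2_iff.1 (hsub he) a ha⟩, hedge, hpair⟩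
      rintro rfl; exact hfree e he ha
    · rintro ⟨hsub, hedge, hpair⟩
      refine ⟨⟨fun e he => Finset.sym2_mono (Finset.erase_subset _ _) (hsub he), hedge, hpair⟩,
        fun e he hv' => ?_⟩
      have := Finset.mem_sym2_iff.1 (hsub he) v hv'
      simp at this
  have h1 : ∑ D ∈ (matchingsOn G S).filter (fun D => ∀ e ∈ D, v ∉ e),
      ((∏ e ∈ D, w e) * ∏ z ∈ S.filter (fun z => ∀ e ∈ D, z ∉ e), x z)
      = x v * Zgen G (S.erase v) x w := by
    rw [hset, Zgen, Finset.mul_sum]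
    refine Finset.sum_congr rfl fun D hD => ?_
    obtain ⟨hsub, -, -⟩ := mem_matchingsOn.1 hD
    have hfree : ∀ e ∈ D, v ∉ e := by
      intro e he hv'
      have := Finset.mem_sym2_iff.1 (hsub he) v hv'
      simp at this
    have hvP : v ∈ S.filter (fun z => ∀ e ∈ D, z ∉ e) := Finset.mem_filter.2 ⟨hv, hfree⟩
    rw [← Finset.mul_prod_erase _ _ hvP]
    have : (S.filter (fun z => ∀ e ∈ D, z ∉ e)).erase v
        = (S.erase v).filter (fun z => ∀ e ∈ D, z ∉ e) := by
      ext z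
      simp only [Finset.mem_erase, Finset.mem_filter]
      tauto
    rw [this]; ring
  rw [h1]
  congr 1
  -- covered part
  have key : ∑ p ∈ ((S.erase v).filter (G.Adj v)).sigma
        (fun u => matchingsOn G ((S.erase v).erase u)),
      (w s(v, p.1) * ((∏ e ∈ p.2, w e) *
        ∏ z ∈ ((S.erase v).erase p.1).filter (fun z => ∀ e ∈ p.2, z ∉ e), x z))
      = ∑ D ∈ (matchingsOn G S).filter (fun D => ¬ ∀ e ∈ D, v ∉ e),
      ((∏ e ∈ D, w e) * ∏ z ∈ S.filter (fun z => ∀ e ∈ D, z ∉ e), x z) := by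
    refine Finset.sum_bij (fun p _ => insert s(v, p.1) p.2) ?_ ?_ ?_ ?_
    · -- membership
      rintro ⟨u, D⟩ hp
      rw [Finset.mem_sigma] at hp
      obtain ⟨hu, hD⟩ := hp
      rw [Finset.mem_filter, Finset.mem_erase] at hu
      obtain ⟨⟨hune, huS⟩, hadj⟩ := hu
      obtain ⟨hsub, hedge, hpair⟩ := mem_matchingsOn.1 hD
      have hvfree : ∀ e ∈ D, v ∉ e := by
        intro e he hv'
        have := Finset.mem_sym2_iff.1 (hsub he) v hv'
        simp at this
      have hufree : ∀ e ∈ D, u ∉ e := by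
        intro e he hu'
        have := Finset.mem_sym2_iff.1 (hsub he) u hu'
        simp at this
      rw [Finset.mem_filter]
      constructor
      · rw [mem_matchingsOn]
        refine ⟨?_, ?_, ?_⟩
        · intro e he
          rcases Finset.mem_insert.1 he with rfl | he'
          · exact Finset.mk_mem_sym2_iff.2 ⟨hv, huS⟩
          · exact Finset.sym2_mono ((Finset.erase_subset _ _).trans (Finset.erase_subset _ _))
              (hsub he')
        · intro e he
          rcases Finset.mem_insert.1 he with rfl | he'
          · exact hadj
          · exact hedge e he'
        · rw [Finset.coe_insert]
          have hsym : Symmetric (fun (e f : Sym2 V) => ∀ z, z ∈ e → z ∉ f) := by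
            intro e f h z hzf hze
            exact h z hze hzf
          haveI : Std.Symm (fun (e f : Sym2 V) => ∀ z, z ∈ e → z ∉ f) := ⟨fun e f h => hsym h⟩
          refine (Set.pairwise_insert_of_symm (r := fun (e f : Sym2 V) => ∀ z, z ∈ e → z ∉ f)).2 ⟨hpair, ?_⟩
          intro f hf _ z hz
          rcases Sym2.mem_iff.1 hz with rfl | rfl
          · exact hvfree f hf
          · exact hufree f hf
      · push_neg
        exact ⟨s(v, u), Finset.mem_insert_self _ _, Sym2.mem_mk_left _ _⟩
    · -- injectivity
      rintro ⟨u1, D1⟩ hp1 ⟨u2, D2⟩ hp2 heq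
      rw [Finset.mem_sigma] at hp1 hp2
      obtain ⟨hu1, hD1⟩ := hp1
      obtain ⟨hu2, hD2⟩ := hp2
      rw [Finset.mem_filter, Finset.mem_erase] at hu1 hu2
      have hvfree : ∀ D' : Finset (Sym2 V), ∀ u', D' ∈ matchingsOn G ((S.erase v).erase u') →
          ∀ e ∈ D', v ∉ e := by
        intro D' u' hD' e he hv'
        obtain ⟨hsub, -, -⟩ := mem_matchingsOn.1 hD'
        have := Finset.mem_sym2_iff.1 (hsub he) v hv'
        simp at this
      dsimp only at heq
      have h1 : s(v, u1) ∉ D1 := fun h => hvfree D1 u1 hD1 _ h (Sym2.mem_mk_left _ _)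
      have h2 : s(v, u2) ∉ D2 := fun h => hvfree D2 u2 hD2 _ h (Sym2.mem_mk_left _ _)
      have huu : u1 = u2 := by
        have : s(v, u1) ∈ insert s(v, u2) D2 := by
          rw [← heq]; exact Finset.mem_insert_self _ _
        rcases Finset.mem_insert.1 this with h | h
        · rcases Sym2.eq_iff.1 h with ⟨-, h'⟩ | ⟨-, h'⟩
          · exact h'
          · exact absurd h' hu1.1.1
        · exact absurd (Sym2.mem_mk_left _ _) (hvfree D2 u2 hD2 _ h)
      subst huu
      have hDD : D1 = D2 := by
        have := congrArg (fun s => Finset.erase s s(v, u1)) heq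
        simpa [Finset.erase_insert h1, Finset.erase_insert h2] using this
      rw [hDD]
    · -- surjectivity
      intro D hD
      rw [Finset.mem_filter] at hD
      obtain ⟨hDm, hcov⟩ := hD
      push_neg at hcov
      obtain ⟨e, he, hve⟩ := hcov
      obtain ⟨hsub, hedge, hpair⟩ := mem_matchingsOn.1 hDm
      set u := Sym2.Mem.other hve with hu_def
      have heq : s(v, u) = e := Sym2.other_spec hve
      have huS : u ∈ S := Finset.mem_sym2_iff.1 (hsub he) u (by rw [← heq]; simp)
      have hadj : G.Adj v u := by
        have := hedge e he
        rw [← heq, SimpleGraph.mem_edgeSet] at this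
        exact this
      have hune : u ≠ v := hadj.ne'
      have hD' : D.erase e ∈ matchingsOn G ((S.erase v).erase u) := by
        rw [mem_matchingsOn]
        refine ⟨?_, fun f hf => hedge f (Finset.mem_of_mem_erase hf), hpair.mono (by simp [Finset.erase_subset])⟩
        intro f hf
        have hfD := Finset.mem_of_mem_erase hf
        have hfe : f ≠ e := Finset.ne_of_mem_erase hf
        refine Finset.mem_sym2_iff.2 fun a ha => ?_
        have haS : a ∈ S := Finset.mem_sym2_iff.1 (hsub hfD) a ha
        have hdisj := hpair (Finset.mem_coe.2 he) (Finset.mem_coe.2 hfD) (Ne.symm hfe)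
        rw [Finset.mem_erase, Finset.mem_erase]
        refine ⟨?_, ?_, haS⟩
        · rintro rfl
          exact hdisj u (by rw [← heq]; simp) ha
        · rintro rfl
          exact hdisj a hve ha
      refine ⟨⟨u, D.erase e⟩, Finset.mem_sigma.2 ⟨?_, hD'⟩, ?_⟩
      · rw [Finset.mem_filter, Finset.mem_erase]
        exact ⟨⟨hune, huS⟩, hadj⟩
      · simp only
        rw [heq, Finset.insert_erase he]
    · -- term equality
      rintro ⟨u, D⟩ hp
      rw [Finset.mem_sigma] at hp
      obtain ⟨hu, hD⟩ := hp
      rw [Finset.mem_filter, Finset.mem_erase] at hu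
      obtain ⟨⟨hune, huS⟩, hadj⟩ := hu
      obtain ⟨hsub, hedge, hpair⟩ := mem_matchingsOn.1 hD
      have hvfree : ∀ e ∈ D, v ∉ e := by
        intro e he hv'
        have := Finset.mem_sym2_iff.1 (hsub he) v hv'
        simp at this
      have hufree : ∀ e ∈ D, u ∉ e := by
        intro e he hu'
        have := Finset.mem_sym2_iff.1 (hsub he) u hu'
        simp at this
      have hnotmem : s(v, u) ∉ D := fun h => hvfree _ h (Sym2.mem_mk_left _ _)
      simp only
      rw [Finset.prod_insert hnotmem]
      have hfil : S.filter (fun z => ∀ e ∈ insert s(v, u) D, z ∉ e)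
          = ((S.erase v).erase u).filter (fun z => ∀ e ∈ D, z ∉ e) := by
        ext z
        simp only [Finset.mem_filter, Finset.mem_erase, Finset.mem_insert]
        constructor
        · rintro ⟨hzS, hall⟩
          have hznotvu : z ∉ s(v, u) := hall s(v, u) (Or.inl rfl)
          rw [Sym2.mem_iff] at hznotvu
          push_neg at hznotvu
          exact ⟨⟨hznotvu.2, hznotvu.1, hzS⟩, fun e he => hall e (Or.inr he)⟩
        · rintro ⟨⟨hzu, hzv, hzS⟩, hall⟩
          refine ⟨hzS, fun e he => ?_⟩
          rcases he with rfl | he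
          · rw [Sym2.mem_iff]
            push_neg
            exact ⟨hzv, hzu⟩
          · exact hall e he
      rw [hfil]
      ring
  rw [← key, Finset.sum_sigma ((S.erase v).filter (G.Adj v))
    (fun u => matchingsOn G ((S.erase v).erase u))]
  refine Finset.sum_congr rfl fun u hu => ?_
  rw [Zgen, Finset.mul_sum]

end ZgenLemmas

section TreeLemmas
variable {V : Type*} [Fintype V] {T : SimpleGraph V}

lemma mem_descFinset {r v u : V} :
    u ∈ descFinset T r v ↔ T.dist r u = T.dist r v + T.dist v u := by
  simp [descFinset]

lemma descFinset_self_root (r : V) : descFinset T r r = Finset.univ := by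
  ext u; simp [descFinset, SimpleGraph.dist_self]

lemma mem_descFinset_self (r v : V) : v ∈ descFinset T r v := by
  simp [descFinset, SimpleGraph.dist_self]

/-- In a tree, every path realizes the distance. -/
lemma tree_path_length (hT : T.IsTree) {u v : V} (p : T.Walk u v) (hp : p.IsPath) :
    p.length = T.dist u v := by
  obtain ⟨q, hq, hlen⟩ := hT.isConnected.exists_path_of_dist u v
  rw [(hT.existsUnique_path u v).unique hp hq, hlen]

lemma tree_dist_decomp (hT : T.IsTree) {u v z : V} {p : T.Walk u v}
    (hp : p.IsPath) (hz : z ∈ p.support) : T.dist u v = T.dist u z + T.dist z v := by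
  rw [← tree_path_length hT p hp]
  obtain ⟨q, r, rfl⟩ := SimpleGraph.Walk.mem_support_iff_exists_append.1 hz
  rw [SimpleGraph.Walk.length_append,
    tree_path_length hT q hp.of_append_left, tree_path_length hT r hp.of_append_right]

lemma tree_mem_support_of_dist_eq (hT : T.IsTree) {u v z : V} {p : T.Walk u v}
    (hp : p.IsPath) (h : T.dist u v = T.dist u z + T.dist z v) : z ∈ p.support := by
  obtain ⟨q, hq, hlq⟩ := hT.isConnected.exists_path_of_dist u z
  obtain ⟨r, hr, hlr⟩ := hT.isConnected.exists_path_of_dist z v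
  have hqr : (q.append r).length = T.dist u v := by
    rw [SimpleGraph.Walk.length_append, hlq, hlr, h]
  have hqr_path : (q.append r).IsPath := (q.append r).isPath_of_length_eq_dist hqr
  rw [(hT.existsUnique_path u v).unique hp hqr_path]
  rw [SimpleGraph.Walk.mem_support_append_iff]
  exact Or.inl q.end_mem_support

lemma tree_desc_trans (hT : T.IsTree) {r u w z : V}
    (hu : u ∈ descFinset T r w) (hz : z ∈ descFinset T r u) : z ∈ descFinset T r w := by
  rw [mem_descFinset] at *
  have h1 : T.dist r z = T.dist r w + (T.dist w u + T.dist u z) := by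
    rw [hz, hu]; ring
  have h2 : T.dist w z ≤ T.dist w u + T.dist u z := hT.isConnected.dist_triangle
  have h3 : T.dist r z ≤ T.dist r w + T.dist w z := hT.isConnected.dist_triangle
  omega

/-- adjacent vertices are comparable in the tree order -/
lemma tree_adj_comparable (hT : T.IsTree) {r u v : V} (h : T.Adj u v) :
    v ∈ descFinset T r u ∨ u ∈ descFinset T r v := by
  obtain ⟨p, hp, hlen⟩ := hT.isConnected.exists_path_of_dist r u
  by_cases hv : v ∈ p.support
  · exact Or.inr (by rw [mem_descFinset]; exact tree_dist_decomp hT hp hv)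
  · left
    rw [mem_descFinset]
    have hpath : (p.append (SimpleGraph.Walk.cons h SimpleGraph.Walk.nil)).IsPath := by
      rw [SimpleGraph.Walk.isPath_def, SimpleGraph.Walk.support_append]
      simp only [SimpleGraph.Walk.support_cons, SimpleGraph.Walk.support_nil]
      rw [List.nodup_append]
      refine ⟨hp.support_nodup, by simp, ?_⟩
      simp only [List.tail_cons]
      intro a ha b hb
      simp only [List.mem_singleton] at hb
      subst hb
      rintro rfl
      exact hv ha
    have := tree_dist_decomp hT hpath
      (by rw [SimpleGraph.Walk.mem_support_append_iff]; exact Or.inl p.end_mem_support)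
    have hlen2 : (p.append (SimpleGraph.Walk.cons h SimpleGraph.Walk.nil)).length
        = T.dist r u + 1 := by
      rw [SimpleGraph.Walk.length_append, hlen]; simp
    have hduv : T.dist u v = 1 := SimpleGraph.dist_eq_one_iff_adj.2 h
    rw [tree_path_length hT _ hpath] at hlen2
    rw [hlen2, hduv]

lemma tree_desc_total (hT : T.IsTree) {r u v w : V}
    (hv : u ∈ descFinset T r v) (hw : u ∈ descFinset T r w) :
    v ∈ descFinset T r w ∨ w ∈ descFinset T r v := by
  obtain ⟨p, hp, hlen⟩ := hT.isConnected.exists_path_of_dist r u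
  have hvs : v ∈ p.support := tree_mem_support_of_dist_eq hT hp (mem_descFinset.1 hv)
  obtain ⟨q, q', rfl⟩ := SimpleGraph.Walk.mem_support_iff_exists_append.1 hvs
  have hws : w ∈ q.support ∨ w ∈ q'.support :=
    (SimpleGraph.Walk.mem_support_append_iff _ _).1
      (tree_mem_support_of_dist_eq hT hp (mem_descFinset.1 hw))
  rcases hws with hws | hws
  · left
    rw [mem_descFinset]
    exact tree_dist_decomp hT hp.of_append_left hws
  · right
    rw [mem_descFinset]
    have h1 : T.dist v u = T.dist v w + T.dist w u :=
      tree_dist_decomp hT hp.of_append_right hws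
    have h2 := mem_descFinset.1 hv
    have h3 := mem_descFinset.1 hw
    omega

section chain
variable {l : ℕ} {c : Fin (l + 1) → V}

lemma chain_walk (hinj : Function.Injective c)
    (hadj : ∀ i : Fin l, T.Adj (c i.castSucc) (c i.succ)) (i : ℕ) :
    ∀ j, (hij : i ≤ j) → (hj : j < l + 1) →
      ∃ p : T.Walk (c ⟨i, lt_of_le_of_lt hij hj⟩) (c ⟨j, hj⟩),
        p.IsPath ∧ p.length = j - i ∧
        ∀ z ∈ p.support, ∃ k, i ≤ k ∧ k ≤ j ∧ ∃ hk : k < l + 1, z = c ⟨k, hk⟩ := by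
  refine Nat.le_induction ?_ ?_
  · intro hj
    refine ⟨SimpleGraph.Walk.nil, SimpleGraph.Walk.IsPath.nil, by simp, ?_⟩
    intro z hz
    rw [SimpleGraph.Walk.mem_support_nil_iff] at hz
    exact ⟨i, le_refl i, le_refl i, hj, hz⟩
  · intro j hij IH hj1
    have hjl : j < l := by omega
    have hj : j < l + 1 := by omega
    obtain ⟨p, hp, hplen, hpsupp⟩ := IH hj
    have hadj' : T.Adj (c ⟨j, hj⟩) (c ⟨j + 1, hj1⟩) := by
      have := hadj ⟨j, hjl⟩
      simpa [Fin.castSucc_mk, Fin.succ_mk] using this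
    have hnot : c ⟨j + 1, hj1⟩ ∉ p.support := by
      intro hmem
      obtain ⟨k, hik, hkj, hk, hkeq⟩ := hpsupp _ hmem
      have := hinj hkeq
      rw [Fin.mk.injEq] at this
      omega
    have hpath2 : (p.append (SimpleGraph.Walk.cons hadj' SimpleGraph.Walk.nil)).IsPath := by
      rw [SimpleGraph.Walk.isPath_def, SimpleGraph.Walk.support_append]
      simp only [SimpleGraph.Walk.support_cons, SimpleGraph.Walk.support_nil, List.tail_cons]
      rw [List.nodup_append]
      refine ⟨hp.support_nodup, by simp, ?_⟩
      intro a ha b hb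
      simp only [List.mem_singleton] at hb
      subst hb
      rintro rfl
      exact hnot ha
    refine ⟨p.append (SimpleGraph.Walk.cons hadj' SimpleGraph.Walk.nil), hpath2, ?_, ?_⟩
    · rw [SimpleGraph.Walk.length_append]; simp; omega
    · intro z hz
      rw [SimpleGraph.Walk.support_append] at hz
      simp only [SimpleGraph.Walk.support_cons, SimpleGraph.Walk.support_nil, List.tail_cons,
        List.mem_append, List.mem_singleton] at hz
      rcases hz with hz | hz
      · obtain ⟨k, hik, hkj, hk, hkeq⟩ := hpsupp _ hz
        exact ⟨k, hik, by omega, hk, hkeq⟩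
      · exact ⟨j + 1, by omega, le_refl _, hj1, hz⟩

lemma chain_dist (hT : T.IsTree) (hinj : Function.Injective c)
    (hadj : ∀ i : Fin l, T.Adj (c i.castSucc) (c i.succ))
    {i j : ℕ} (hij : i ≤ j) (hj : j < l + 1) :
    T.dist (c ⟨i, lt_of_le_of_lt hij hj⟩) (c ⟨j, hj⟩) = j - i := by
  obtain ⟨p, hp, hplen, -⟩ := chain_walk hinj hadj i j hij hj
  rw [← tree_path_length hT p hp, hplen]

lemma chain_dist_root (hT : T.IsTree) (hinj : Function.Injective c)
    (hadj : ∀ i : Fin l, T.Adj (c i.castSucc) (c i.succ))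
    {j : ℕ} (hj : j < l + 1) :
    T.dist (c ⟨0, Nat.succ_pos l⟩) (c ⟨j, hj⟩) = j := by
  have := chain_dist hT hinj hadj (Nat.zero_le j) hj
  simpa using this

lemma chain_mem_desc (hT : T.IsTree) (hinj : Function.Injective c)
    (hadj : ∀ i : Fin l, T.Adj (c i.castSucc) (c i.succ))
    {i j : ℕ} (hij : i ≤ j) (hj : j < l + 1) :
    c ⟨j, hj⟩ ∈ descFinset T (c ⟨0, Nat.succ_pos l⟩) (c ⟨i, lt_of_le_of_lt hij hj⟩) := by
  rw [mem_descFinset, chain_dist_root hT hinj hadj, chain_dist_root hT hinj hadj,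
    chain_dist hT hinj hadj hij hj]
  omega

lemma chain_desc_subset (hT : T.IsTree) (hinj : Function.Injective c)
    (hadj : ∀ i : Fin l, T.Adj (c i.castSucc) (c i.succ))
    {i j : ℕ} (hij : i ≤ j) (hj : j < l + 1) :
    descFinset T (c ⟨0, Nat.succ_pos l⟩) (c ⟨j, hj⟩) ⊆
      descFinset T (c ⟨0, Nat.succ_pos l⟩) (c ⟨i, lt_of_le_of_lt hij hj⟩) := by
  intro z hz
  exact tree_desc_trans hT (chain_mem_desc hT hinj hadj hij hj) hz

lemma chain_not_mem_desc (hT : T.IsTree) (hinj : Function.Injective c)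
    (hadj : ∀ i : Fin l, T.Adj (c i.castSucc) (c i.succ))
    {i j : ℕ} (hij : i < j) (hj : j < l + 1) :
    c ⟨i, lt_trans hij hj⟩ ∉ descFinset T (c ⟨0, Nat.succ_pos l⟩) (c ⟨j, hj⟩) := by
  rw [mem_descFinset, chain_dist_root hT hinj hadj, chain_dist_root hT hinj hadj]
  omega

/-- the only neighbor of `c i` inside the subtree of `c (i+1)` is `c (i+1)` itself. -/
lemma chain_nbr_unique (hT : T.IsTree) (hinj : Function.Injective c)
    (hadj : ∀ i : Fin l, T.Adj (c i.castSucc) (c i.succ))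
    {i : ℕ} (hi : i + 1 < l + 1) {u : V}
    (hu : u ∈ descFinset T (c ⟨0, Nat.succ_pos l⟩) (c ⟨i + 1, hi⟩))
    (hadju : T.Adj (c ⟨i, by omega⟩) u) : u = c ⟨i + 1, hi⟩ := by
  rw [mem_descFinset, chain_dist_root hT hinj hadj] at hu
  have h1 : T.dist (c ⟨0, Nat.succ_pos l⟩) u ≤
      T.dist (c ⟨0, Nat.succ_pos l⟩) (c ⟨i, by omega⟩) + T.dist (c ⟨i, by omega⟩) u :=
    hT.isConnected.dist_triangle
  rw [chain_dist_root hT hinj hadj, SimpleGraph.dist_eq_one_iff_adj.2 hadju] at h1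
  have : T.dist (c ⟨i + 1, hi⟩) u = 0 := by omega
  exact ((hT.isConnected.dist_eq_zero_iff).1 this).symm

/-- separation: no edge joins the subtree of `c (i+1)` with the rest of the subtree
of `c i` minus `c i`. -/
lemma chain_sep (hT : T.IsTree) (hinj : Function.Injective c)
    (hadj : ∀ i : Fin l, T.Adj (c i.castSucc) (c i.succ))
    {i : ℕ} (hi : i + 1 < l + 1) {a b : V}
    (ha : a ∈ descFinset T (c ⟨0, Nat.succ_pos l⟩) (c ⟨i + 1, hi⟩))
    (hb1 : b ∈ descFinset T (c ⟨0, Nat.succ_pos l⟩) (c ⟨i, by omega⟩))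
    (hb2 : b ≠ c ⟨i, by omega⟩)
    (hb3 : b ∉ descFinset T (c ⟨0, Nat.succ_pos l⟩) (c ⟨i + 1, hi⟩)) :
    ¬ T.Adj a b := by
  intro hab
  set r := c ⟨0, Nat.succ_pos l⟩
  rcases tree_adj_comparable hT (r := r) hab with h | h
  · exact hb3 (tree_desc_trans hT ha h)
  · rcases tree_desc_total hT h ha with h2 | h2
    · exact hb3 h2
    · -- c (i+1) ∈ desc b ; derive b = c (i+1)
      rw [mem_descFinset] at h2 hb1
      rw [chain_dist_root hT hinj hadj] at h2
      rw [chain_dist_root hT hinj hadj] at hb1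
      have hpos : 0 < T.dist (c ⟨i, by omega⟩) b :=
        hT.isConnected.pos_dist_of_ne (Ne.symm hb2)
      have hzero : T.dist b (c ⟨i + 1, hi⟩) = 0 := by omega
      have : b = c ⟨i + 1, hi⟩ := (hT.isConnected.dist_eq_zero_iff).1 hzero
      exact hb3 (this ▸ mem_descFinset_self r _)
end chain

end TreeLemmas

section steps
variable {V : Type*} [DecidableEq V] {G : SimpleGraph V} {x : V → ℝ} {w : Sym2 V → ℝ}
  {P Q Rr B' : Finset V} {v v' : V}

lemma Zstep
    (hvP : v ∈ P)
    (hsplit : ∀ z, (z ∈ P ∧ z ≠ v) ↔ (z ∈ Q ∨ z ∈ Rr))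
    (hdisj : Disjoint Q Rr)
    (hsep : ∀ a ∈ Q, ∀ b ∈ Rr, ¬ G.Adj a b)
    (hv'Q : v' ∈ Q) (hadjv : G.Adj v v')
    (hnbr : ∀ u ∈ Q, G.Adj v u → u = v')
    (hB'Q : B' ⊆ Q) (hv'B' : v' ∉ B') :
    Zgen G (P \ B') x w =
      Zgen G (Q \ B') x w *
        (x v * Zgen G Rr x w +
          ∑ u ∈ Rr.filter (G.Adj v), w s(v, u) * Zgen G (Rr.erase u) x w) +
      w s(v, v') * (Zgen G ((Q \ B').erase v') x w * Zgen G Rr x w) := by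
  have hvQ : v ∉ Q := fun h => by
    have := (hsplit v).2 (Or.inl h); exact this.2 rfl
  have hvR : v ∉ Rr := fun h => by
    have := (hsplit v).2 (Or.inr h); exact this.2 rfl
  have hQP : ∀ z ∈ Q, z ∈ P ∧ z ≠ v := fun z hz => (hsplit z).2 (Or.inl hz)
  have hRP : ∀ z ∈ Rr, z ∈ P ∧ z ≠ v := fun z hz => (hsplit z).2 (Or.inr hz)
  have hB'R : ∀ z ∈ B', z ∉ Rr := fun z hz hr =>
    (Finset.disjoint_left.1 hdisj) (hB'Q hz) hr
  -- recursion at v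
  have harg1 : v ∈ P \ B' := by
    rw [Finset.mem_sdiff]
    exact ⟨hvP, fun h => hvQ (hB'Q h)⟩
  have harg2 : ∀ z, z ∈ (Q \ B') ∪ Rr ↔ z ∈ P \ B' ∧ z ≠ v := by
    intro z
    simp only [Finset.mem_union, Finset.mem_sdiff]
    constructor
    · rintro (⟨hzQ, hzB⟩ | hzR)
      · exact ⟨⟨(hQP z hzQ).1, fun h => hzB h⟩, (hQP z hzQ).2⟩
      · exact ⟨⟨(hRP z hzR).1, fun h => hB'R z h hzR⟩, (hRP z hzR).2⟩
    · rintro ⟨⟨hzP, hzB⟩, hzv⟩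
      rcases (hsplit z).1 ⟨hzP, hzv⟩ with h | h
      · exact Or.inl ⟨h, hzB⟩
      · exact Or.inr h
  have harg3 : ∀ u, u ∈ insert v' (Rr.filter (G.Adj v)) ↔ u ∈ P \ B' ∧ G.Adj v u := by
    intro u
    simp only [Finset.mem_insert, Finset.mem_filter, Finset.mem_sdiff]
    constructor
    · rintro (rfl | ⟨huR, huA⟩)
      · exact ⟨⟨(hQP u hv'Q).1, fun h => hv'B' h⟩, hadjv⟩
      · exact ⟨⟨(hRP u huR).1, fun h => hB'R u h huR⟩, huA⟩
    · rintro ⟨⟨huP, huB⟩, huA⟩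
      rcases (hsplit u).1 ⟨huP, huA.ne'⟩ with h | h
      · exact Or.inl (hnbr u h huA)
      · exact Or.inr ⟨h, huA⟩
  have harg4 : ∀ u ∈ insert v' (Rr.filter (G.Adj v)), ∀ z,
      z ∈ (if u = v' then ((Q \ B').erase v') ∪ Rr else (Q \ B') ∪ (Rr.erase u)) ↔
        z ∈ P \ B' ∧ z ≠ v ∧ z ≠ u := by
    intro u hu z
    rcases Finset.mem_insert.1 hu with rfl | hu'
    · rw [if_pos rfl]
      simp only [Finset.mem_union, Finset.mem_erase, Finset.mem_sdiff]
      constructor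
      · rintro (⟨hzv', hzQ, hzB⟩ | hzR)
        · exact ⟨⟨(hQP z hzQ).1, fun h => hzB h⟩, (hQP z hzQ).2, hzv'⟩
        · exact ⟨⟨(hRP z hzR).1, fun h => hB'R z h hzR⟩, (hRP z hzR).2,
            fun h => (Finset.disjoint_left.1 hdisj) hv'Q (h ▸ hzR)⟩
      · rintro ⟨⟨hzP, hzB⟩, hzv, hzu⟩
        rcases (hsplit z).1 ⟨hzP, hzv⟩ with h | h
        · exact Or.inl ⟨hzu, h, hzB⟩
        · exact Or.inr h
    · rw [Finset.mem_filter] at hu'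
      have huv' : u ≠ v' := fun h =>
        (Finset.disjoint_left.1 hdisj) hv'Q (h ▸ hu'.1)
      simp only [if_neg huv', Finset.mem_union, Finset.mem_erase, Finset.mem_sdiff]
      constructor
      · rintro (⟨hzQ, hzB⟩ | ⟨hzu, hzR⟩)
        · exact ⟨⟨(hQP z hzQ).1, fun h => hzB h⟩, (hQP z hzQ).2,
            fun h => (Finset.disjoint_left.1 hdisj) hzQ (h ▸ hu'.1)⟩
        · exact ⟨⟨(hRP z hzR).1, fun h => hB'R z h hzR⟩, (hRP z hzR).2, hzu⟩
      · rintro ⟨⟨hzP, hzB⟩, hzv, hzu⟩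
        rcases (hsplit z).1 ⟨hzP, hzv⟩ with h | h
        · exact Or.inl ⟨h, hzB⟩
        · exact Or.inr ⟨hzu, h⟩
  have hrec := Zgen_rec (G := G) (x := x) (w := w) harg1 harg2 harg3 harg4
  rw [hrec]
  have hv'notR : v' ∉ Rr.filter (G.Adj v) := fun h =>
    (Finset.disjoint_left.1 hdisj) hv'Q (Finset.mem_filter.1 h).1
  rw [Finset.sum_insert hv'notR]
  have hsepQB : ∀ a ∈ Q \ B', ∀ b ∈ Rr, ¬ G.Adj a b := fun a ha b hb =>
    hsep a (Finset.mem_sdiff.1 ha).1 b hb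
  have hdisjQB : Disjoint (Q \ B') Rr := hdisj.mono (Finset.sdiff_subset) le_rfl
  have hu1 : Zgen G ((Q \ B') ∪ Rr) x w = Zgen G (Q \ B') x w * Zgen G Rr x w :=
    Zgen_union hdisjQB hsepQB (fun a => Finset.mem_union)
  have hu2 : Zgen G (if v' = v' then ((Q \ B').erase v') ∪ Rr else (Q \ B') ∪ (Rr.erase v')) x w
      = Zgen G ((Q \ B').erase v') x w * Zgen G Rr x w := by
    rw [if_pos rfl]
    exact Zgen_union (hdisjQB.mono (Finset.erase_subset _ _) le_rfl)
      (fun a ha => hsepQB a (Finset.mem_of_mem_erase ha))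
      (fun a => Finset.mem_union)
  have hu3 : ∀ u ∈ Rr.filter (G.Adj v),
      Zgen G (if u = v' then ((Q \ B').erase v') ∪ Rr else (Q \ B') ∪ (Rr.erase u)) x w
      = Zgen G (Q \ B') x w * Zgen G (Rr.erase u) x w := by
    intro u hu
    have huv' : u ≠ v' := fun h =>
      (Finset.disjoint_left.1 hdisj) hv'Q (h ▸ (Finset.mem_filter.1 hu).1)
    rw [if_neg huv']
    exact Zgen_union (hdisjQB.mono le_rfl (Finset.erase_subset _ _))
      (fun a ha b hb => hsepQB a ha b (Finset.mem_of_mem_erase hb))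
      (fun a => Finset.mem_union)
  rw [hu1, hu2, Finset.sum_congr rfl (fun u hu => by rw [hu3 u hu])]
  have expand : Zgen G (Q \ B') x w *
      (x v * Zgen G Rr x w + ∑ u ∈ Rr.filter (G.Adj v), w s(v, u) * Zgen G (Rr.erase u) x w)
      = x v * (Zgen G (Q \ B') x w * Zgen G Rr x w) +
        ∑ u ∈ Rr.filter (G.Adj v), w s(v, u) * (Zgen G (Q \ B') x w * Zgen G (Rr.erase u) x w) := by
    rw [mul_add, Finset.mul_sum]
    congr 1
    · ring
    · exact Finset.sum_congr rfl fun u _ => by ring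
  rw [expand]
  ring

lemma Zstep2
    (hvP : v ∈ P)
    (hsplit : ∀ z, (z ∈ P ∧ z ≠ v) ↔ (z ∈ Q ∨ z ∈ Rr))
    (hdisj : Disjoint Q Rr)
    (hsep : ∀ a ∈ Q, ∀ b ∈ Rr, ¬ G.Adj a b)
    (hnbr : ∀ u ∈ Q, G.Adj v u → u = v') :
    Zgen G (P \ Q) x w =
      x v * Zgen G Rr x w +
        ∑ u ∈ Rr.filter (G.Adj v), w s(v, u) * Zgen G (Rr.erase u) x w := by
  have hvQ : v ∉ Q := fun h => by
    have := (hsplit v).2 (Or.inl h); exact this.2 rfl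
  have hRP : ∀ z ∈ Rr, z ∈ P ∧ z ≠ v := fun z hz => (hsplit z).2 (Or.inr hz)
  have hRQ : ∀ z ∈ Rr, z ∉ Q := fun z hz => Finset.disjoint_right.1 hdisj hz
  have harg1 : v ∈ P \ Q := Finset.mem_sdiff.2 ⟨hvP, hvQ⟩
  have harg2 : ∀ z, z ∈ Rr ↔ z ∈ P \ Q ∧ z ≠ v := by
    intro z
    simp only [Finset.mem_sdiff]
    constructor
    · intro hz
      exact ⟨⟨(hRP z hz).1, hRQ z hz⟩, (hRP z hz).2⟩
    · rintro ⟨⟨hzP, hzQ⟩, hzv⟩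
      rcases (hsplit z).1 ⟨hzP, hzv⟩ with h | h
      · exact absurd h hzQ
      · exact h
  have harg3 : ∀ u, u ∈ Rr.filter (G.Adj v) ↔ u ∈ P \ Q ∧ G.Adj v u := by
    intro u
    simp only [Finset.mem_filter, Finset.mem_sdiff]
    constructor
    · rintro ⟨huR, huA⟩
      exact ⟨⟨(hRP u huR).1, hRQ u huR⟩, huA⟩
    · rintro ⟨⟨huP, huQ⟩, huA⟩
      rcases (hsplit u).1 ⟨huP, huA.ne'⟩ with h | h
      · exact absurd h huQ
      · exact ⟨h, huA⟩
  have harg4 : ∀ u ∈ Rr.filter (G.Adj v), ∀ z, z ∈ Rr.erase u ↔ z ∈ P \ Q ∧ z ≠ v ∧ z ≠ u := by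
    intro u hu z
    simp only [Finset.mem_erase, Finset.mem_sdiff]
    constructor
    · rintro ⟨hzu, hzR⟩
      exact ⟨⟨(hRP z hzR).1, hRQ z hzR⟩, (hRP z hzR).2, hzu⟩
    · rintro ⟨⟨hzP, hzQ⟩, hzv, hzu⟩
      rcases (hsplit z).1 ⟨hzP, hzv⟩ with h | h
      · exact absurd h hzQ
      · exact ⟨hzu, h⟩
  exact Zgen_rec (G := G) (x := x) (w := w) harg1 harg2 harg3 harg4

end steps


/-- on a finite tree `T` rooted at `c 0` with a simple path
`c 0, c 1, …, c l`, the inequality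
`1_{l≥1}·Z_{T_{c₁}−T_{c_l}}·Z_T ≥ Z_{T_{c₁}}·Z_{T−T_{c_l}}` holds for `l` odd,
and the reversed inequality holds for `l` even. -/
theorem stmt_15 {V : Type*} [Fintype V] [DecidableEq V] (T : SimpleGraph V)
    (hT : T.IsTree) (x : V → ℝ) (w : Sym2 V → ℝ)
    (hx : ∀ v, 0 < x v) (hw : ∀ e, 0 < w e)
    (l : ℕ) (c : Fin (l + 1) → V) (hinj : Function.Injective c)
    (hadj : ∀ i : Fin l, T.Adj (c i.castSucc) (c i.succ)) :
    (Odd l →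
        Zgen T (descFinset T (c 0) (c 1)) x w *
            Zgen T (Finset.univ \ descFinset T (c 0) (c (Fin.last l))) x w ≤
          (if 1 ≤ l then (1 : ℝ) else 0) *
            (Zgen T (descFinset T (c 0) (c 1) \ descFinset T (c 0) (c (Fin.last l))) x w *
              Zgen T Finset.univ x w)) ∧
      (Even l →
        (if 1 ≤ l then (1 : ℝ) else 0) *
            (Zgen T (descFinset T (c 0) (c 1) \ descFinset T (c 0) (c (Fin.last l))) x w *
              Zgen T Finset.univ x w) ≤
          Zgen T (descFinset T (c 0) (c 1)) x w *
            Zgen T (Finset.univ \ descFinset T (c 0) (c (Fin.last l))) x w) := by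
  rcases Nat.eq_zero_or_pos l with rfl | hl
  · constructor
    · intro hodd
      exact absurd hodd (by simp)
    · intro _
      rw [if_neg (by omega), zero_mul]
      exact le_of_lt (mul_pos (Zgen_pos hx hw) (Zgen_pos hx hw))
  -- now 1 ≤ l
  have hlpos : 1 ≤ l := hl
  -- index conversion helpers
  set cn : ℕ → V := fun i => c ⟨min i l, Nat.lt_succ_of_le (min_le_right i l)⟩ with hcn_def
  have hcni : ∀ i (h : i ≤ l), cn i = c ⟨i, Nat.lt_succ_of_le h⟩ := by
    intro i h
    simp only [hcn_def]
    congr 1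
    exact Fin.ext (by simpa using Nat.min_eq_left h)
  set A : ℕ → Finset V := fun i => descFinset T (cn 0) (cn i) with hA_def
  have hc0 : c 0 = cn 0 := by rw [hcni 0 (by omega)]; rfl
  have hc1 : c 1 = cn 1 := by
    rw [hcni 1 hl]
    congr 1
    exact Fin.ext (by simp [Fin.val_one']; omega)
  have hclast : c (Fin.last l) = cn l := by rw [hcni l le_rfl]; rfl
  have hA0 : A 0 = Finset.univ := by
    rw [hA_def]
    exact descFinset_self_root _
  -- basic chain facts in terms of cn / A
  have h_self : ∀ i, i ≤ l → cn i ∈ A i := by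
    intro i hi
    exact mem_descFinset_self _ _
  have h_sub : ∀ i j, i ≤ j → j ≤ l → A j ⊆ A i := by
    intro i j hij hj
    rw [hA_def]
    simp only
    rw [hcni 0 (by omega), hcni i (by omega), hcni j hj]
    exact chain_desc_subset hT hinj hadj hij (by omega)
  have h_notmem : ∀ i j, i < j → j ≤ l → cn i ∉ A j := by
    intro i j hij hj
    rw [hA_def]
    simp only
    rw [hcni 0 (by omega), hcni i (by omega), hcni j hj]
    exact chain_not_mem_desc hT hinj hadj hij (by omega)
  have h_adj : ∀ i, i < l → T.Adj (cn i) (cn (i + 1)) := by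
    intro i hi
    rw [hcni i (by omega), hcni (i+1) (by omega)]
    have := hadj ⟨i, hi⟩
    simpa [Fin.castSucc_mk, Fin.succ_mk] using this
  have h_nbr : ∀ i, i < l → ∀ u ∈ A (i + 1), T.Adj (cn i) u → u = cn (i + 1) := by
    intro i hi u hu hadju
    rw [hA_def] at hu
    simp only at hu
    rw [hcni 0 (by omega), hcni (i+1) (by omega)] at hu
    rw [hcni i (by omega)] at hadju
    rw [hcni (i+1) (by omega)]
    exact chain_nbr_unique hT hinj hadj (by omega) hu hadju
  have h_sep : ∀ i, i < l → ∀ a ∈ A (i + 1), ∀ b ∈ A i, b ≠ cn i → b ∉ A (i + 1) →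
      ¬ T.Adj a b := by
    intro i hi a ha b hb1 hb2 hb3
    rw [hA_def] at ha hb1 hb3
    simp only at ha hb1 hb3
    rw [hcni 0 (by omega), hcni (i+1) (by omega)] at ha hb3
    rw [hcni 0 (by omega), hcni i (by omega)] at hb1
    rw [hcni i (by omega)] at hb2
    exact chain_sep hT hinj hadj (by omega) ha hb1 hb2 hb3
  -- the "rest" sets and the K quantities
  set R : ℕ → Finset V := fun i => ((A i).erase (cn i)) \ A (i + 1) with hR_def
  set K : ℕ → ℝ := fun i => x (cn i) * Zgen T (R i) x w +
    ∑ u ∈ (R i).filter (T.Adj (cn i)), w s(cn i, u) * Zgen T ((R i).erase u) x w with hK_def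
  -- split facts
  have hsplit : ∀ i, i < l → ∀ z, (z ∈ A i ∧ z ≠ cn i) ↔ (z ∈ A (i + 1) ∨ z ∈ R i) := by
    intro i hi z
    constructor
    · rintro ⟨hz, hzne⟩
      by_cases h : z ∈ A (i + 1)
      · exact Or.inl h
      · exact Or.inr (by
          rw [hR_def]
          simp only [Finset.mem_sdiff, Finset.mem_erase]
          exact ⟨⟨hzne, hz⟩, h⟩)
    · rintro (hz | hz)
      · refine ⟨h_sub i (i+1) (by omega) (by omega) hz, ?_⟩
        rintro rfl
        exact h_notmem i (i+1) (by omega) (by omega) hz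
      · rw [hR_def] at hz
        simp only [Finset.mem_sdiff, Finset.mem_erase] at hz
        exact ⟨hz.1.2, hz.1.1⟩
  have hdisj : ∀ i, Disjoint (A (i + 1)) (R i) := by
    intro i
    rw [Finset.disjoint_right]
    intro z hz
    rw [hR_def] at hz
    simp only [Finset.mem_sdiff] at hz
    exact hz.2
  have hsep' : ∀ i, i < l → ∀ a ∈ A (i + 1), ∀ b ∈ R i, ¬ T.Adj a b := by
    intro i hi a ha b hb
    rw [hR_def] at hb
    simp only [Finset.mem_sdiff, Finset.mem_erase] at hb
    exact h_sep i hi a ha b hb.1.2 hb.1.1 hb.2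
  -- step identities
  have hS1 : ∀ i, i < l → ∀ B' : Finset V, B' ⊆ A (i + 1) → cn (i + 1) ∉ B' →
      Zgen T (A i \ B') x w = Zgen T (A (i + 1) \ B') x w * K i +
        w s(cn i, cn (i + 1)) *
          (Zgen T ((A (i + 1) \ B').erase (cn (i + 1))) x w * Zgen T (R i) x w) := by
    intro i hi B' hB1 hB2
    rw [hK_def]
    exact Zstep (h_self i (by omega)) (hsplit i hi) (hdisj i) (hsep' i hi)
      (h_self (i+1) (by omega)) (h_adj i hi) (h_nbr i hi) hB1 hB2
  have hS2 : ∀ i, i < l →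
      Zgen T (A i \ A (i + 1)) x w = K i := by
    intro i hi
    rw [hK_def]
    exact Zstep2 (v' := cn (i+1)) (h_self i (by omega)) (hsplit i hi) (hdisj i) (hsep' i hi)
      (h_nbr i hi)
  have hSU : ∀ i, i < l → ∀ B' : Finset V, B' ⊆ A (i + 1) →
      Zgen T (((A i).erase (cn i)) \ B') x w
        = Zgen T (A (i + 1) \ B') x w * Zgen T (R i) x w := by
    intro i hi B' hB1
    refine Zgen_union ((hdisj i).mono Finset.sdiff_subset le_rfl)
      (fun a ha b hb => hsep' i hi a (Finset.mem_sdiff.1 ha).1 b hb) ?_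
    intro z
    simp only [Finset.mem_sdiff, Finset.mem_erase]
    constructor
    · rintro ⟨⟨hzne, hz⟩, hzB⟩
      rcases (hsplit i hi z).1 ⟨hz, hzne⟩ with h | h
      · exact Or.inl ⟨h, hzB⟩
      · exact Or.inr h
    · rintro (⟨hz, hzB⟩ | hz)
      · have := (hsplit i hi z).2 (Or.inl hz)
        exact ⟨⟨this.2, this.1⟩, hzB⟩
      · have := (hsplit i hi z).2 (Or.inr hz)
        refine ⟨⟨this.2, this.1⟩, fun hzB => ?_⟩
        exact (Finset.disjoint_left.1 (hdisj i)) (hB1 hzB) hz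
  have hEr : ∀ i, i < l → Zgen T ((A i).erase (cn i)) x w
      = Zgen T (A (i + 1)) x w * Zgen T (R i) x w := by
    intro i hi
    have := hSU i hi ∅ (Finset.empty_subset _)
    simpa [Finset.sdiff_empty] using this
  have hesd : ∀ (s t : Finset V) (a : V), (s \ t).erase a = (s.erase a) \ t := by
    intro s t a
    ext z
    simp only [Finset.mem_erase, Finset.mem_sdiff]
    tauto
  -- positivity helpers
  have hZpos : ∀ S : Finset V, 0 < Zgen T S x w := fun S => Zgen_pos hx hw
  -- the key sign induction
  have hsign : ∀ j i, i + j + 1 = l →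
      (Even j → Zgen T (A i \ A l) x w * Zgen T ((A i).erase (cn i)) x w ≤
        Zgen T (A i) x w * Zgen T (((A i).erase (cn i)) \ A l) x w) ∧
      (Odd j → Zgen T (A i) x w * Zgen T (((A i).erase (cn i)) \ A l) x w ≤
        Zgen T (A i \ A l) x w * Zgen T ((A i).erase (cn i)) x w) := by
    intro j
    induction j with
    | zero =>
      intro i hi
      have hil : i < l := by omega
      have hAl : A l = A (i + 1) := by rw [show l = i + 1 by omega]
      have hZ1 : Zgen T (A i \ A l) x w = K i := by rw [hAl]; exact hS2 i hil
      have hZ2 : Zgen T ((A i).erase (cn i)) x w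
          = Zgen T (A (i + 1)) x w * Zgen T (R i) x w := hEr i hil
      have hZ3 : Zgen T (A i) x w = Zgen T (A (i + 1)) x w * K i +
          w s(cn i, cn (i + 1)) *
            (Zgen T ((A (i + 1)).erase (cn (i + 1))) x w * Zgen T (R i) x w) := by
        have := hS1 i hil ∅ (Finset.empty_subset _) (Finset.notMem_empty _)
        simpa [Finset.sdiff_empty] using this
      have hZ4 : Zgen T (((A i).erase (cn i)) \ A l) x w = Zgen T (R i) x w := by
        rw [hAl, hR_def]
      constructor
      · intro _
        rw [hZ1, hZ2, hZ3, hZ4]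
        have h1 := hZpos ((A (i+1)).erase (cn (i+1)))
        have h2 := hZpos (R i)
        have h3 := hw s(cn i, cn (i + 1))
        nlinarith [mul_pos (mul_pos h3 h1) (mul_pos h2 h2)]
      · intro hodd
        exact absurd hodd (by simp)
    | succ j IH =>
      intro i hi
      have hil : i < l := by omega
      have hi1l : i + 1 < l := by omega
      have hBsub : A l ⊆ A (i + 1) := h_sub (i+1) l (by omega) le_rfl
      have hcB : cn (i + 1) ∉ A l := h_notmem (i+1) l (by omega) le_rfl
      have hZ1 : Zgen T (A i \ A l) x w = Zgen T (A (i + 1) \ A l) x w * K i +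
          w s(cn i, cn (i + 1)) *
            (Zgen T ((A (i + 1) \ A l).erase (cn (i + 1))) x w * Zgen T (R i) x w) :=
        hS1 i hil (A l) hBsub hcB
      have hZ3 : Zgen T (A i) x w = Zgen T (A (i + 1)) x w * K i +
          w s(cn i, cn (i + 1)) *
            (Zgen T ((A (i + 1)).erase (cn (i + 1))) x w * Zgen T (R i) x w) := by
        have := hS1 i hil ∅ (Finset.empty_subset _) (Finset.notMem_empty _)
        simpa [Finset.sdiff_empty] using this
      have hZ2 : Zgen T ((A i).erase (cn i)) x w
          = Zgen T (A (i + 1)) x w * Zgen T (R i) x w := hEr i hil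
      have hZ4 : Zgen T (((A i).erase (cn i)) \ A l) x w
          = Zgen T (A (i + 1) \ A l) x w * Zgen T (R i) x w := hSU i hil (A l) hBsub
      have hcomm : (A (i + 1) \ A l).erase (cn (i + 1))
          = ((A (i + 1)).erase (cn (i + 1))) \ A l := hesd _ _ _
      obtain ⟨IH1, IH2⟩ := IH (i + 1) (by omega)
      have h2 := hZpos (R i)
      have h3 := hw s(cn i, cn (i + 1))
      have key : Zgen T (A i) x w * Zgen T (((A i).erase (cn i)) \ A l) x w -
          Zgen T (A i \ A l) x w * Zgen T ((A i).erase (cn i)) x w =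
          (w s(cn i, cn (i + 1)) * (Zgen T (R i) x w * Zgen T (R i) x w)) *
            (Zgen T (A (i + 1) \ A l) x w * Zgen T ((A (i + 1)).erase (cn (i + 1))) x w -
              Zgen T (A (i + 1)) x w * Zgen T (((A (i + 1)).erase (cn (i + 1))) \ A l) x w) := by
        rw [hZ1, hZ2, hZ3, hZ4, hcomm]
        ring
      have hpos : (0 : ℝ) < w s(cn i, cn (i + 1)) * (Zgen T (R i) x w * Zgen T (R i) x w) :=
        mul_pos h3 (mul_pos h2 h2)
      constructor
      · -- Even (j+1) hence Odd j : use IH2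
        intro heven
        have hoddj : Odd j := by
          rcases heven with ⟨k, hk⟩
          exact ⟨k - 1, by omega⟩
        have hd := sub_nonneg.2 (IH2 hoddj)
        have hprod := mul_nonneg hpos.le hd
        rw [mul_sub] at hprod
        linarith [key]
      · -- Odd (j+1) hence Even j : use IH1
        intro hodd
        have hevenj : Even j := by
          rcases hodd with ⟨k, hk⟩
          exact ⟨k, by omega⟩
        have hd := sub_nonneg.2 (IH1 hevenj)
        have hprod := mul_nonneg hpos.le hd
        rw [mul_sub] at hprod
        linarith [key]
  -- final assembly
  have e1 : descFinset T (cn 0) (cn 1) = A 1 := rfl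
  have el : descFinset T (cn 0) (cn l) = A l := rfl
  rw [hc0, hc1, hclast, e1, el, ← hA0, if_pos hlpos]
  -- goal now in terms of A
  have h3 := hw s(cn 0, cn 1)
  have h2 := hZpos (R 0)
  rcases Nat.lt_or_ge l 2 with h2l | h2l
  · -- l = 1
    have hl1 : l = 1 := by omega
    have hA1l : A l = A 1 := by rw [hl1]
    have hZsd : Zgen T (A 1 \ A l) x w = 1 := by
      rw [hA1l, Finset.sdiff_self, Zgen_empty]
    have hZ3 : Zgen T (A 0) x w = Zgen T (A 1) x w * K 0 +
        w s(cn 0, cn 1) *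
          (Zgen T ((A 1).erase (cn 1)) x w * Zgen T (R 0) x w) := by
      have := hS1 0 (by omega) ∅ (Finset.empty_subset _) (Finset.notMem_empty _)
      simpa [Finset.sdiff_empty] using this
    have hZ4 : Zgen T (A 0 \ A l) x w = K 0 := by
      rw [hA1l]
      exact hS2 0 (by omega)
    have hq' := hZpos ((A 1).erase (cn 1))
    constructor
    · intro _
      rw [hZsd, hZ3, hZ4, one_mul]
      nlinarith [mul_pos h3 (mul_pos hq' h2)]
    · intro heven
      rw [hl1] at heven
      exact absurd heven (by simp)
  · -- l ≥ 2
    have hBsub : A l ⊆ A 1 := h_sub 1 l (by omega) le_rfl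
    have hcB : cn 1 ∉ A l := h_notmem 1 l (by omega) le_rfl
    have hZ1 : Zgen T (A 0 \ A l) x w = Zgen T (A 1 \ A l) x w * K 0 +
        w s(cn 0, cn 1) *
          (Zgen T ((A 1 \ A l).erase (cn 1)) x w * Zgen T (R 0) x w) :=
      hS1 0 (by omega) (A l) hBsub hcB
    have hZ3 : Zgen T (A 0) x w = Zgen T (A 1) x w * K 0 +
        w s(cn 0, cn 1) *
          (Zgen T ((A 1).erase (cn 1)) x w * Zgen T (R 0) x w) := by
      have := hS1 0 (by omega) ∅ (Finset.empty_subset _) (Finset.notMem_empty _)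
      simpa [Finset.sdiff_empty] using this
    have hcomm : (A 1 \ A l).erase (cn 1) = ((A 1).erase (cn 1)) \ A l := hesd _ _ _
    have key : Zgen T (A 1 \ A l) x w * Zgen T (A 0) x w -
        Zgen T (A 1) x w * Zgen T (A 0 \ A l) x w =
        (w s(cn 0, cn 1) * Zgen T (R 0) x w) *
          (Zgen T (A 1 \ A l) x w * Zgen T ((A 1).erase (cn 1)) x w -
            Zgen T (A 1) x w * Zgen T (((A 1).erase (cn 1)) \ A l) x w) := by
      rw [hZ1, hZ3, hcomm]
      ring
    have hpos : (0 : ℝ) < w s(cn 0, cn 1) * Zgen T (R 0) x w := mul_pos h3 h2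
    obtain ⟨hsign1, hsign2⟩ := hsign (l - 2) 1 (by omega)
    constructor
    · intro hodd
      have : Odd (l - 2) := by
        rcases hodd with ⟨k, hk⟩
        exact ⟨k - 1, by omega⟩
      have hd := sub_nonneg.2 (hsign2 this)
      have hprod := mul_nonneg hpos.le hd
      rw [mul_sub] at hprod
      rw [one_mul]
      linarith [key]
    · intro heven
      have : Even (l - 2) := by
        rcases heven with ⟨k, hk⟩
        exact ⟨k - 1, by omega⟩
      have hd := sub_nonneg.2 (hsign1 this)
      have hprod := mul_nonneg hpos.le hd
      rw [mul_sub] at hprod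
      rw [one_mul]
      linarith [key]
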